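/- Let F be a complex Finsler metric on a domain Ω ⊆ ℂⁿ, and let (p₀;v₀) ∈ Ω × ℂⁿ. Say that F is realizable at (p₀;v₀) if there exist a holomorphic map φ: U → Ω and λ ∈ ℂ with φ(0) = p₀, λ·φ'(0) = v₀ and |λ| = F(p₀;v₀). Then: (i) if F is realizable at (p₀;v₀), then F(p₀;v₀) ≥ κ_Ω(p₀;v₀); (ii) if K_F(p;v) ≤ −4 for all p ∈ Ω and v ∈ ℂⁿ∖{0}, then F(p;v) ≤ κ_Ω(p;v) for all (p;v) ∈ Ω × ℂⁿ; (iii) if F is realizable at (p₀;v₀) and K_F ≤ −4 everywhere, then F(p₀;v₀) = κ_Ω(p₀;v₀). -/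

import Mathlib

open Complex Filter MeasureTheory Metric Set ComplexConjugate
open scoped ComplexOrder

noncomputable section

/-- The unit disk in `ℂ`. -/
def UDisk : Set ℂ := Metric.ball 0 1

/-- The (lower) generalized Laplacian of `u : ℂ → ℝ` at `ζ`, with values in `[-∞,+∞]`:
`Δu(ζ) = 4·liminf_{r→0⁺} (1/r²)·[(1/(2π))∫₀^{2π} u(ζ+re^{iθ}) dθ − u(ζ)]`. -/
def genLap (u : ℂ → ℝ) (ζ : ℂ) : EReal :=
  ((4 : ℝ) : EReal) * Filter.liminf
    (fun r : ℝ =>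
      (((1 / r ^ 2) *
        ((1 / (2 * Real.pi)) *
          (∫ θ in (0:ℝ)..(2 * Real.pi), u (ζ + r * Complex.exp (θ * Complex.I))) - u ζ) : ℝ) :
        EReal))
    (nhdsWithin 0 (Set.Ioi 0))

/-- The Gaussian curvature of the pseudohermitian metric with scale `g`, computed with the
generalized Laplacian: `K(μ_g)(ζ) = −(1/(2g(ζ)))·Δ(log g)(ζ)`. -/
def gaussCurv (g : ℂ → ℝ) (ζ : ℂ) : EReal :=
  ((-(1 / (2 * g ζ)) : ℝ) : EReal) * genLap (fun w => Real.log (g w)) ζ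

variable {n : ℕ}

/-- A domain in `ℂⁿ`: a nonempty open connected set. -/
def IsDomainSet (Ω : Set (Fin n → ℂ)) : Prop := IsOpen Ω ∧ IsConnected Ω

/-- A complex Finsler metric on `Ω`: upper semicontinuous, positive on nonzero vectors,
and absolutely homogeneous of degree one in the vector variable. -/
def IsFinsler (Ω : Set (Fin n → ℂ)) (F : (Fin n → ℂ) → (Fin n → ℂ) → ℝ) : Prop :=
  UpperSemicontinuousOn (fun x : (Fin n → ℂ) × (Fin n → ℂ) => F x.1 x.2) (Ω ×ˢ Set.univ) ∧
    (∀ p ∈ Ω, ∀ v : Fin n → ℂ, 0 ≤ F p v) ∧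
    (∀ p ∈ Ω, ∀ v : Fin n → ℂ, v ≠ 0 → 0 < F p v) ∧
    ∀ p ∈ Ω, ∀ v : Fin n → ℂ, ∀ l : ℂ, F p (l • v) = ‖l‖ * F p v

/-- A holomorphic map from the unit disk into `Ω`. -/
def HoloDisk (Ω : Set (Fin n → ℂ)) (φ : ℂ → Fin n → ℂ) : Prop :=
  DifferentiableOn ℂ φ UDisk ∧ Set.MapsTo φ UDisk Ω

/-- The holomorphic curvature of a complex Finsler metric `F` at `(p;v)`:
the supremum of the Gaussian curvatures at `0` of the pullbacks `φ*G`, `G = F²`, over all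
holomorphic disks `φ : U → Ω` with `φ(0) = p` and `φ'(0) = λ·v` for some `λ ≠ 0`. -/
def holCurv (Ω : Set (Fin n → ℂ)) (F : (Fin n → ℂ) → (Fin n → ℂ) → ℝ)
    (p v : Fin n → ℂ) : EReal :=
  sSup {k : EReal | ∃ φ : ℂ → Fin n → ℂ, HoloDisk Ω φ ∧ φ 0 = p ∧
    (∃ l : ℂ, l ≠ 0 ∧ deriv φ 0 = l • v) ∧
    k = gaussCurv (fun ζ => F (φ ζ) (deriv φ ζ) ^ 2) 0}

/-- The Kobayashi metric of `Ω`: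
`κ_Ω(p;v) = inf{|λ| : ∃ holomorphic φ : U → Ω, φ(0) = p, λ·φ'(0) = v}`. -/
def kobMetric (Ω : Set (Fin n → ℂ)) (p v : Fin n → ℂ) : ℝ :=
  sInf {c : ℝ | ∃ l : ℂ, ∃ φ : ℂ → Fin n → ℂ, HoloDisk Ω φ ∧ φ 0 = p ∧
    l • deriv φ 0 = v ∧ c = ‖l‖}

/-- `F` is realizable at `(p;v)` if there is a holomorphic disk which is an isometry at the
origin between the Poincaré metric and `F` in the direction `v`. -/
def Realizable {n : ℕ} (Ω : Set (Fin n → ℂ)) (F : (Fin n → ℂ) → (Fin n → ℂ) → ℝ)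
    (p v : Fin n → ℂ) : Prop :=
  ∃ φ : ℂ → Fin n → ℂ, ∃ l : ℂ, HoloDisk Ω φ ∧ φ 0 = p ∧ l • deriv φ 0 = v ∧
    ‖l‖ = F p v

/-! ### Auxiliary lemmas -/

/-- u.s.c. function on compact nonempty set attains its max. -/
lemma usc_exists_max {K : Set ℂ} (hK : IsCompact K) (hne : K.Nonempty) {f : ℂ → ℝ}
    (hf : UpperSemicontinuousOn f K) : ∃ x ∈ K, ∀ y ∈ K, f y ≤ f x := by
  have hclosed : ∀ c : ℝ, IsClosed {x ∈ K | c ≤ f x} := by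
    intro c
    rw [← closure_subset_iff_isClosed]
    intro x hx
    have hxK : x ∈ K := hK.isClosed.closure_subset_iff.2 (sep_subset _ _) hx
    refine ⟨hxK, ?_⟩
    by_contra hlt
    push_neg at hlt
    have hev : ∀ᶠ z in nhdsWithin x K, f z < c := hf x hxK c hlt
    have hne2 : (nhdsWithin x {x ∈ K | c ≤ f x}).NeBot :=
      mem_closure_iff_nhdsWithin_neBot.1 hx
    have hev2 : ∀ᶠ z in nhdsWithin x {x ∈ K | c ≤ f x}, f z < c :=
      hev.filter_mono (nhdsWithin_mono x (sep_subset _ _))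
    have hev3 : ∀ᶠ z in nhdsWithin x {x ∈ K | c ≤ f x}, c ≤ f z :=
      eventually_mem_nhdsWithin.mono (fun z hz => hz.2)
    obtain ⟨z, h1, h2⟩ := (hev2.and hev3).exists
    exact absurd h2 (not_le.2 h1)
  have : Nonempty K := hne.to_subtype
  have key := IsCompact.nonempty_iInter_of_directed_nonempty_isCompact_isClosed
    (fun y : K => {x ∈ K | f y ≤ f x}) ?_ ?_ ?_ ?_
  · obtain ⟨x, hx⟩ := key
    simp only [mem_iInter] at hx
    obtain ⟨y₀⟩ := ‹Nonempty K›
    exact ⟨x, (hx y₀).1, fun y hy => (hx ⟨y, hy⟩).2⟩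
  · intro a b
    rcases le_total (f a) (f b) with h | h
    · exact ⟨b, fun x hx => ⟨hx.1, h.trans hx.2⟩, fun x hx => hx⟩
    · exact ⟨a, fun x hx => hx, fun x hx => ⟨hx.1, h.trans hx.2⟩⟩
  · exact fun y => ⟨y, y.2, le_refl _⟩
  · exact fun y => hK.of_isClosed_subset (hclosed _) (sep_subset _ _)
  · exact fun y => hclosed _

lemma UpperSemicontinuousOn.comp_continuousOn' {α β : Type*} [TopologicalSpace α]
    [TopologicalSpace β] {f : β → ℝ} {g : α → β} {s : Set β} {t : Set α}
    (hf : UpperSemicontinuousOn f s) (hg : ContinuousOn g t) (hmaps : Set.MapsTo g t s) :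
    UpperSemicontinuousOn (fun x => f (g x)) t := by
  intro x hx y hy
  have h1 : ∀ᶠ w in nhdsWithin (g x) s, f w < y := hf (g x) (hmaps hx) y hy
  have h2 : Filter.Tendsto g (nhdsWithin x t) (nhdsWithin (g x) s) :=
    (hg x hx).tendsto_nhdsWithin hmaps
  exact h2.eventually h1

lemma usc_weighted_sq {s : Set ℂ} {c f : ℂ → ℝ} (hc : ContinuousOn c s)
    (hc0 : ∀ x ∈ s, 0 ≤ c x) (hf : UpperSemicontinuousOn f s) (hf0 : ∀ x ∈ s, 0 ≤ f x) :
    UpperSemicontinuousOn (fun x => c x * f x ^ 2) s := by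
  intro x hx y hy
  set A := c x with hA
  set B := f x with hB
  have hcont : Continuous (fun δ : ℝ => (A + δ) * (B + δ) ^ 2) := by continuity
  have h0 : (A + 0) * (B + 0) ^ 2 < y := by simpa using hy
  have hev : ∀ᶠ δ in nhdsWithin (0:ℝ) (Set.Ioi 0), (A + δ) * (B + δ) ^ 2 < y :=
    ((hcont.tendsto 0).mono_left nhdsWithin_le_nhds).eventually_lt_const h0
  obtain ⟨δ, hδy, hδpos⟩ := (hev.and eventually_mem_nhdsWithin).exists
  have hδ : (0:ℝ) < δ := hδpos
  have hevc : ∀ᶠ z in nhdsWithin x s, c z < A + δ :=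
    (hc x hx).eventually_lt_const (by linarith)
  have hevf : ∀ᶠ z in nhdsWithin x s, f z < B + δ := hf x hx (B + δ) (by linarith)
  have hevm : ∀ᶠ z in nhdsWithin x s, z ∈ s := eventually_mem_nhdsWithin
  filter_upwards [hevc, hevf, hevm] with z h1 h2 h3
  have hfz : 0 ≤ f z := hf0 z h3
  have hcz : 0 ≤ c z := hc0 z h3
  have hBδ : 0 < B + δ := lt_of_le_of_lt hfz h2
  calc c z * f z ^ 2 ≤ c z * (B + δ) ^ 2 :=
      mul_le_mul_of_nonneg_left (by nlinarith) hcz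
    _ ≤ (A + δ) * (B + δ) ^ 2 :=
      mul_le_mul_of_nonneg_right h1.le (by positivity)
    _ < y := hδy

lemma normSq_moebius_identity (a w : ℂ) :
    normSq (1 + (starRingEnd ℂ) a * w) - normSq (w + a)
      = (1 - normSq a) * (1 - normSq w) := by
  simp only [normSq_apply, add_re, add_im, mul_re, mul_im, conj_re, conj_im, one_re, one_im]
  ring

lemma den_pos {a w : ℂ} (ha : normSq a < 1) (hw : normSq w < 1) :
    0 < normSq (1 + (starRingEnd ℂ) a * w) := by
  have h := normSq_moebius_identity a w
  nlinarith [normSq_nonneg (w + a), normSq_nonneg (1 + (starRingEnd ℂ) a * w)]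

lemma one_sub_normSq_moebius {a w : ℂ} (ha : normSq a < 1) (hw : normSq w < 1) :
    1 - normSq ((w + a) / (1 + (starRingEnd ℂ) a * w))
      = (1 - normSq a) * (1 - normSq w) / normSq (1 + (starRingEnd ℂ) a * w) := by
  have hd := den_pos ha hw
  rw [normSq_div]
  rw [one_sub_div hd.ne']
  congr 1
  linarith [normSq_moebius_identity a w]

lemma moebius_mem_ball {a w : ℂ} (ha : normSq a < 1) (hw : normSq w < 1) :
    normSq ((w + a) / (1 + (starRingEnd ℂ) a * w)) < 1 := by
  have h := one_sub_normSq_moebius ha hw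
  have hd := den_pos ha hw
  nlinarith [div_pos (mul_pos (by linarith : (0:ℝ) < 1 - normSq a)
    (by linarith : (0:ℝ) < 1 - normSq w)) hd]

lemma hasDerivAt_moebius {a w : ℂ} (ha : normSq a < 1) (hw : normSq w < 1) :
    HasDerivAt (fun z => (z + a) / (1 + (starRingEnd ℂ) a * z))
      ((1 - (starRingEnd ℂ) a * a) / (1 + (starRingEnd ℂ) a * w) ^ 2) w := by
  have hd : (1 + (starRingEnd ℂ) a * w) ≠ 0 := by
    intro h
    have := den_pos ha hw
    rw [h] at this
    simp at this
  have h1 : HasDerivAt (fun z : ℂ => z + a) 1 w := (hasDerivAt_id w).add_const a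
  have h2 : HasDerivAt (fun z : ℂ => 1 + (starRingEnd ℂ) a * z) ((starRingEnd ℂ) a) w := by
    simpa using ((hasDerivAt_id w).const_mul ((starRingEnd ℂ) a)).const_add 1
  have := h1.div h2 hd
  refine HasDerivAt.congr_deriv this ?_
  ring

lemma normSq_one_sub_conj_mul (a : ℂ) :
    normSq (1 - (starRingEnd ℂ) a * a) = (1 - normSq a) ^ 2 := by
  have : (1 : ℂ) - (starRingEnd ℂ) a * a = ((1 - normSq a : ℝ) : ℂ) := by
    rw [mul_comm, mul_conj]
    push_cast
    ring
  rw [this, normSq_ofReal]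
  ring

lemma tendsto_beta :
    Tendsto (fun r : ℝ => (1 / r ^ 2) * (-2 * Real.log (1 - r ^ 2)))
      (nhdsWithin 0 (Set.Ioi 0)) (nhds 2) := by
  have hlog : HasDerivAt (fun x : ℝ => Real.log (1 - x)) (-1) 0 := by
    have h1 : HasDerivAt (fun x : ℝ => 1 - x) (-1) 0 := by
      exact (hasDerivAt_id (0:ℝ)).const_sub 1
    have h2 : HasDerivAt Real.log 1 ((fun x : ℝ => 1 - x) 0) := by
      simpa using Real.hasDerivAt_log (by norm_num : (1:ℝ) ≠ 0)
    have h3 := h2.comp 0 h1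
    rw [one_mul] at h3
    exact h3
  rw [hasDerivAt_iff_tendsto_slope] at hlog
  have hslope : Tendsto (fun x : ℝ => Real.log (1 - x) / x)
      (nhdsWithin 0 {(0:ℝ)}ᶜ) (nhds (-1)) := by
    refine hlog.congr' ?_
    filter_upwards [eventually_mem_nhdsWithin] with x hx
    simp [slope_def_field, div_eq_iff, sub_zero]
  have hsq : Tendsto (fun r : ℝ => r ^ 2) (nhdsWithin 0 (Set.Ioi 0))
      (nhdsWithin 0 {(0:ℝ)}ᶜ) := by
    rw [tendsto_nhdsWithin_iff]
    constructor
    · have : Tendsto (fun r : ℝ => r ^ 2) (nhds 0) (nhds 0) := by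
        simpa using (continuous_pow 2).tendsto (0:ℝ)
      exact this.mono_left nhdsWithin_le_nhds
    · filter_upwards [eventually_mem_nhdsWithin] with r hr
      simp only [mem_compl_iff, mem_singleton_iff]
      have : (0:ℝ) < r := hr
      positivity
  have hcomp := (hslope.comp hsq).const_mul (-2 : ℝ)
  have : Tendsto (fun r : ℝ => -2 * (Real.log (1 - r ^ 2) / r ^ 2))
      (nhdsWithin 0 (Set.Ioi 0)) (nhds 2) := by
    convert hcomp using 2
    all_goals norm_num
  refine this.congr (fun r => by ring)

set_option maxHeartbeats 1600000 in
/-- The key Ahlfors–Schwarz lemma: if the holomorphic curvature of `F` is at most `-4`,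
then every holomorphic disk satisfies `F(φ(0); φ'(0)) ≤ 1`. -/
lemma key_schwarz {n : ℕ} {Ω : Set (Fin n → ℂ)}
    {F : (Fin n → ℂ) → (Fin n → ℂ) → ℝ} (hF : IsFinsler Ω F)
    (hcurv : ∀ p ∈ Ω, ∀ v : Fin n → ℂ, v ≠ 0 → holCurv Ω F p v ≤ ((-4 : ℝ) : EReal))
    {φ : ℂ → Fin n → ℂ} (hφ : HoloDisk Ω φ) :
    F (φ 0) (deriv φ 0) ≤ 1 := by
  obtain ⟨husc, hnonneg, hpos, hhom⟩ := hF
  obtain ⟨hφd, hφm⟩ := hφ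
  have hUopen : IsOpen UDisk := isOpen_ball
  have h0U : (0:ℂ) ∈ UDisk := by simp [UDisk]
  -- main claim for each t
  have main : ∀ t : ℝ, t ∈ Set.Ioo (0:ℝ) 1 →
      t ^ 2 * F (φ 0) (deriv φ 0) ^ 2 ≤ 1 := by
    rintro t ⟨ht0, ht1⟩
    -- membership lemma
    have hmem : ∀ ζ : ℂ, ‖ζ‖ ≤ 1 → ((t:ℂ) * ζ) ∈ UDisk := by
      intro ζ hζ
      simp only [UDisk, mem_ball_zero_iff, norm_mul, Complex.norm_real, Real.norm_eq_abs]
      calc |t| * ‖ζ‖ ≤ |t| * 1 :=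
            mul_le_mul_of_nonneg_left hζ (abs_nonneg t)
        _ < 1 := by rw [mul_one, abs_of_pos ht0]; exact ht1
    set K : Set ℂ := Metric.closedBall (0:ℂ) 1 with hK
    have hKmem : ∀ ζ ∈ K, ‖ζ‖ ≤ 1 := by
      intro ζ hζ
      simpa [hK] using mem_closedBall_zero_iff.1 hζ
    -- continuity of deriv φ
    have hanal : AnalyticOnNhd ℂ φ UDisk := hφd.analyticOnNhd hUopen
    have hdcont : ContinuousOn (deriv φ) UDisk := hanal.deriv.continuousOn
    -- the scaled metric
    set h : ℂ → ℝ := fun ζ =>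
      (t ^ 2 * (1 - normSq ζ) ^ 2) * F (φ ((t:ℂ) * ζ)) (deriv φ ((t:ℂ) * ζ)) ^ 2 with hh
    have hmapsU : Set.MapsTo (fun ζ : ℂ => (t:ℂ) * ζ) K UDisk :=
      fun ζ hζ => hmem ζ (hKmem ζ hζ)
    have hmulcont : ContinuousOn (fun ζ : ℂ => (t:ℂ) * ζ) K :=
      (continuous_mul_left _).continuousOn
    have hqcont : ContinuousOn
        (fun ζ : ℂ => (φ ((t:ℂ) * ζ), deriv φ ((t:ℂ) * ζ))) K := by
      refine ContinuousOn.prodMk ?_ ?_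
      · exact hφd.continuousOn.comp hmulcont hmapsU
      · exact hdcont.comp hmulcont hmapsU
    have hqmaps : Set.MapsTo (fun ζ : ℂ => (φ ((t:ℂ) * ζ), deriv φ ((t:ℂ) * ζ))) K
        (Ω ×ˢ Set.univ) := by
      intro ζ hζ
      exact ⟨hφm (hmapsU hζ), mem_univ _⟩
    have hFq : UpperSemicontinuousOn
        (fun ζ : ℂ => F (φ ((t:ℂ) * ζ)) (deriv φ ((t:ℂ) * ζ))) K :=
      husc.comp_continuousOn' hqcont hqmaps
    have hhusc : UpperSemicontinuousOn h K := by
      refine usc_weighted_sq ?_ ?_ hFq ?_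
      · exact (Continuous.continuousOn (by continuity))
      · intro x _; positivity
      · intro x hx; exact hnonneg _ (hφm (hmapsU hx)) _
    obtain ⟨ζ₀, hζ₀K, hmax⟩ :=
      usc_exists_max (isCompact_closedBall 0 1) ⟨0, by simp⟩ hhusc
    set M : ℝ := h ζ₀ with hM
    -- the main claim : M ≤ 1
    have hM1 : M ≤ 1 := by
      by_contra hMgt
      push_neg at hMgt
      have hMpos : 0 < M := lt_trans one_pos hMgt
      have hn0le : normSq ζ₀ ≤ 1 := by
        have := hKmem ζ₀ hζ₀K
        nlinarith [Complex.sq_norm ζ₀, norm_nonneg ζ₀]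
      have hζ₀lt : normSq ζ₀ < 1 := by
        rcases lt_or_eq_of_le hn0le with h' | h'
        · exact h'
        · exfalso
          have : M = 0 := by rw [hM, hh]; simp [h']
          linarith
      -- Möbius data
      set a : ℂ := ζ₀ with ha
      set T : ℂ → ℂ := fun w => (w + a) / (1 + (starRingEnd ℂ) a * w) with hT
      set m : ℂ → ℂ := fun w => (t:ℂ) * T w with hm
      set χ : ℂ → Fin n → ℂ := fun w => φ (m w) with hχ
      set dT : ℂ → ℂ := fun w =>
        (1 - (starRingEnd ℂ) a * a) / (1 + (starRingEnd ℂ) a * w) ^ 2 with hdT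
      have hwU : ∀ w ∈ UDisk, normSq w < 1 := by
        intro w hw
        have : ‖w‖ < 1 := by
          simpa [UDisk] using mem_ball_zero_iff.1 hw
        nlinarith [Complex.sq_norm w, norm_nonneg w]
      have hTU : ∀ w ∈ UDisk, normSq (T w) < 1 := fun w hw =>
        moebius_mem_ball hζ₀lt (hwU w hw)
      have hTK : ∀ w ∈ UDisk, T w ∈ K := by
        intro w hw
        have := hTU w hw
        rw [hK, mem_closedBall_zero_iff]
        have h1 : ‖T w‖ ^ 2 < 1 := by rwa [Complex.sq_norm]
        nlinarith [norm_nonneg (T w)]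
      have hmU : ∀ w ∈ UDisk, m w ∈ UDisk := by
        intro w hw
        refine hmem (T w) ?_
        have h1 : ‖T w‖ ^ 2 < 1 := by rw [Complex.sq_norm]; exact hTU w hw
        nlinarith [norm_nonneg (T w)]
      have hχΩ : ∀ w ∈ UDisk, χ w ∈ Ω := fun w hw => hφm (hmU w hw)
      -- derivative of χ
      have hχderiv : ∀ w ∈ UDisk,
          HasDerivAt χ (((t:ℂ) * dT w) • deriv φ (m w)) w := by
        intro w hw
        have hTd : HasDerivAt T (dT w) w := hasDerivAt_moebius hζ₀lt (hwU w hw)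
        have hmd : HasDerivAt m ((t:ℂ) * dT w) w := hTd.const_mul ((t:ℂ))
        have hφat : DifferentiableAt ℂ φ (m w) :=
          hφd.differentiableAt (hUopen.mem_nhds (hmU w hw))
        exact (hφat.hasDerivAt.scomp w hmd :)
      have hχderiv' : ∀ w ∈ UDisk, deriv χ w = ((t:ℂ) * dT w) • deriv φ (m w) :=
        fun w hw => (hχderiv w hw).deriv
      set g : ℂ → ℝ := fun ζ => F (χ ζ) (deriv χ ζ) ^ 2 with hg
      -- value of g
      have hgval : ∀ w ∈ UDisk,
          g w = (t ^ 2 * (1 - normSq a) ^ 2 / normSq (1 + (starRingEnd ℂ) a * w) ^ 2)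
            * F (φ (m w)) (deriv φ (m w)) ^ 2 := by
        intro w hw
        have h1 : g w = F (χ w) (((t:ℂ) * dT w) • deriv φ (m w)) ^ 2 := by
          rw [hg]; simp only; rw [hχderiv' w hw]
        rw [h1, hhom _ (hχΩ w hw), mul_pow, Complex.sq_norm]
        congr 1
        rw [map_mul, normSq_ofReal, hdT]
        simp only
        rw [normSq_div, normSq_one_sub_conj_mul, map_pow]
        ring
      -- the fundamental inequality
      have hden_pos : ∀ w ∈ UDisk, 0 < normSq (1 + (starRingEnd ℂ) a * w) :=
        fun w hw => den_pos hζ₀lt (hwU w hw)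
      have hgle : ∀ w ∈ UDisk, g w ≤ M / (1 - normSq w) ^ 2 := by
        intro w hw
        have hWpos : 0 < 1 - normSq w := by linarith [hwU w hw]
        have hNpos := hden_pos w hw
        have hhTw : h (T w) ≤ M := hmax _ (hTK w hw)
        have hexp : h (T w) = (t ^ 2 * ((1 - normSq a) * (1 - normSq w)
            / normSq (1 + (starRingEnd ℂ) a * w)) ^ 2)
            * F (φ (m w)) (deriv φ (m w)) ^ 2 := by
          rw [hh]
          simp only
          rw [one_sub_normSq_moebius hζ₀lt (hwU w hw)]
        rw [hexp] at hhTw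
        rw [hgval w hw, le_div_iff₀ (by positivity)]
        calc (t ^ 2 * (1 - normSq a) ^ 2 / normSq (1 + (starRingEnd ℂ) a * w) ^ 2)
              * F (φ (m w)) (deriv φ (m w)) ^ 2 * (1 - normSq w) ^ 2
            = (t ^ 2 * ((1 - normSq a) * (1 - normSq w)
                / normSq (1 + (starRingEnd ℂ) a * w)) ^ 2)
              * F (φ (m w)) (deriv φ (m w)) ^ 2 := by
              field_simp
          _ ≤ M := hhTw
      -- center values
      have hT0 : T 0 = a := by rw [hT]; simp
      have hg0 : g 0 = M := by
        rw [hgval 0 h0U, hM, hh]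
        simp only [hm, hT0, mul_zero, add_zero, map_one, one_pow, div_one]
      -- χ is a holomorphic disk
      have hχholo : HoloDisk Ω χ :=
        ⟨fun w hw => ((hχderiv w hw).differentiableAt).differentiableWithinAt,
          fun w hw => hχΩ w hw⟩
      have hv : deriv χ 0 ≠ 0 := by
        intro h0
        have hz : g 0 = 0 := by
          show F (χ 0) (deriv χ 0) ^ 2 = 0
          rw [h0]
          have h00 : (0 : Fin n → ℂ) = (0:ℂ) • (0 : Fin n → ℂ) := by simp
          rw [h00, hhom _ (hχΩ 0 h0U)]
          simp
        rw [hg0] at hz; linarith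
      -- apply the curvature hypothesis
      have hle : gaussCurv g 0 ≤ holCurv Ω F (χ 0) (deriv χ 0) := by
        unfold holCurv
        exact le_sSup ⟨χ, hχholo, rfl, ⟨1, one_ne_zero, (one_smul _ _).symm⟩, by rw [hg]⟩
      have hcurvle : gaussCurv g 0 ≤ ((-4 : ℝ) : EReal) :=
        le_trans hle (hcurv (χ 0) (hχΩ 0 h0U) _ hv)
      have hcurvle' : ((-(1 / (2 * g 0)) : ℝ) : EReal) *
          (((4 : ℝ) : EReal) * Filter.liminf
            (fun r : ℝ =>
              (((1 / r ^ 2) *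
                ((1 / (2 * Real.pi)) *
                  (∫ θ in (0:ℝ)..(2 * Real.pi),
                    Real.log (g (0 + r * Complex.exp (θ * Complex.I)))) -
                  Real.log (g 0)) : ℝ) : EReal))
            (nhdsWithin 0 (Set.Ioi 0))) ≤ ((-4 : ℝ) : EReal) := hcurvle
      set L : EReal := Filter.liminf
            (fun r : ℝ =>
              (((1 / r ^ 2) *
                ((1 / (2 * Real.pi)) *
                  (∫ θ in (0:ℝ)..(2 * Real.pi),
                    Real.log (g (0 + r * Complex.exp (θ * Complex.I)))) -
                  Real.log (g 0)) : ℝ) : EReal))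
            (nhdsWithin 0 (Set.Ioi 0)) with hLdef
      -- bound the liminf
      have hlogM : 0 < Real.log M := Real.log_pos hMgt
      have hebound : ∀ r ∈ Set.Ioo (0:ℝ) 1,
          (1 / r ^ 2) *
            ((1 / (2 * Real.pi)) *
              (∫ θ in (0:ℝ)..(2 * Real.pi),
                Real.log (g (0 + r * Complex.exp (θ * Complex.I)))) -
              Real.log (g 0))
          ≤ (1 / r ^ 2) * (-2 * Real.log (1 - r ^ 2)) := by
        rintro r ⟨hr0, hr1⟩
        have h1r : (0:ℝ) < 1 - r ^ 2 := by nlinarith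
        have hpt : ∀ θ : ℝ,
            Real.log (g (0 + (r:ℂ) * Complex.exp ((θ:ℂ) * Complex.I)))
              ≤ Real.log M - 2 * Real.log (1 - r ^ 2) := by
          intro θ
          set w : ℂ := 0 + (r:ℂ) * Complex.exp ((θ:ℂ) * Complex.I) with hwdef
          have habs : ‖w‖ = r := by
            rw [hwdef, zero_add, norm_mul, Complex.norm_real,
              Complex.norm_exp_ofReal_mul_I, mul_one, Real.norm_eq_abs, abs_of_pos hr0]
          have hnw : normSq w = r ^ 2 := by rw [← Complex.sq_norm, habs]
          have hwU' : w ∈ UDisk := by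
            rw [UDisk, mem_ball_zero_iff, habs]; exact hr1
          have hb := hgle w hwU'
          rw [hnw] at hb
          have hgnn : 0 ≤ g w := by rw [hg]; positivity
          rcases hgnn.lt_or_eq with hgw | hgw
          · calc Real.log (g w) ≤ Real.log (M / (1 - r ^ 2) ^ 2) :=
                Real.log_le_log hgw hb
              _ = Real.log M - 2 * Real.log (1 - r ^ 2) := by
                rw [Real.log_div (ne_of_gt hMpos) (by positivity), Real.log_pow]
                push_cast; ring
          · rw [← hgw, Real.log_zero]
            have hlt : Real.log (1 - r ^ 2) ≤ 0 :=
              Real.log_nonpos (by linarith) (by nlinarith)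
            linarith
        have hlogg0 : Real.log (g 0) = Real.log M := by rw [hg0]
        by_cases hint : IntervalIntegrable
            (fun θ : ℝ => Real.log (g (0 + (r:ℂ) * Complex.exp ((θ:ℂ) * Complex.I))))
            MeasureTheory.volume 0 (2 * Real.pi)
        · have hIle : (∫ θ in (0:ℝ)..(2 * Real.pi),
              Real.log (g (0 + (r:ℂ) * Complex.exp ((θ:ℂ) * Complex.I))))
              ≤ 2 * Real.pi * (Real.log M - 2 * Real.log (1 - r ^ 2)) := by
            have := intervalIntegral.integral_mono_on
              (by positivity : (0:ℝ) ≤ 2 * Real.pi) hint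
              (intervalIntegrable_const
                (c := Real.log M - 2 * Real.log (1 - r ^ 2)))
              (fun θ _ => hpt θ)
            rw [intervalIntegral.integral_const, sub_zero, smul_eq_mul] at this
            exact this
          rw [hlogg0]
          have h2 : (1 / (2 * Real.pi)) *
              (∫ θ in (0:ℝ)..(2 * Real.pi),
                Real.log (g (0 + (r:ℂ) * Complex.exp ((θ:ℂ) * Complex.I))))
              ≤ (1 / (2 * Real.pi)) *
                (2 * Real.pi * (Real.log M - 2 * Real.log (1 - r ^ 2))) :=
            mul_le_mul_of_nonneg_left hIle (by positivity)
          have h3 : (1 / (2 * Real.pi)) *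
              (2 * Real.pi * (Real.log M - 2 * Real.log (1 - r ^ 2)))
              = Real.log M - 2 * Real.log (1 - r ^ 2) := by
            have : Real.pi ≠ 0 := ne_of_gt Real.pi_pos
            field_simp
          refine mul_le_mul_of_nonneg_left ?_ (by positivity)
          rw [h3] at h2
          linarith
        · rw [intervalIntegral.integral_undef hint, hlogg0]
          have hβ : 0 ≤ -2 * Real.log (1 - r ^ 2) := by
            nlinarith [Real.log_nonpos (by linarith : (0:ℝ) ≤ 1 - r ^ 2)
              (by nlinarith : 1 - r ^ 2 ≤ 1)]
          have h4 : (1 / r ^ 2) * ((1 / (2 * Real.pi)) * 0 - Real.log M) ≤ 0 := by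
            apply mul_nonpos_of_nonneg_of_nonpos (by positivity)
            simp only [mul_zero, zero_sub]
            linarith
          have h5 : 0 ≤ (1 / r ^ 2) * (-2 * Real.log (1 - r ^ 2)) :=
            mul_nonneg (by positivity) hβ
          linarith
      have hLle : L ≤ ((2:ℝ) : EReal) := by
        have hup : L ≤ Filter.liminf
            (fun r : ℝ => (((1 / r ^ 2) * (-2 * Real.log (1 - r ^ 2)) : ℝ) : EReal))
            (nhdsWithin 0 (Set.Ioi 0)) := by
          rw [hLdef]
          refine Filter.liminf_le_liminf ?_
          filter_upwards [Ioo_mem_nhdsGT_of_mem (by norm_num : (0:ℝ) ∈ Set.Ico 0 1)]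
            with r hr
          exact EReal.coe_le_coe_iff.2 (hebound r hr)
        have heq : Filter.liminf
            (fun r : ℝ => (((1 / r ^ 2) * (-2 * Real.log (1 - r ^ 2)) : ℝ) : EReal))
            (nhdsWithin 0 (Set.Ioi 0)) = ((2:ℝ) : EReal) :=
          (EReal.tendsto_coe.2 tendsto_beta).liminf_eq
        exact le_trans hup (le_of_eq heq)
      -- derive the contradiction
      have hcoefneg : -(1 / (2 * g 0)) < 0 := by
        rw [hg0]
        have : 0 < 1 / (2 * M) := by positivity
        linarith
      rcases eq_or_ne L ⊥ with hbot | hbot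
      · rw [hbot, EReal.coe_mul_bot_of_pos (by norm_num : (0:ℝ) < 4),
          EReal.coe_mul_bot_of_neg hcoefneg, top_le_iff] at hcurvle'
        exact (EReal.coe_ne_top _) hcurvle'
      rcases eq_or_ne L ⊤ with htop | htop
      · rw [htop, top_le_iff] at hLle
        exact (EReal.coe_ne_top _) hLle
      · have hx : ((L.toReal : ℝ) : EReal) = L := EReal.coe_toReal htop hbot
        set x : ℝ := L.toReal with hxdef
        rw [← hx] at hLle hcurvle'
        rw [← EReal.coe_mul, ← EReal.coe_mul] at hcurvle'
        have hreal : -(1 / (2 * g 0)) * (4 * x) ≤ -4 := EReal.coe_le_coe_iff.1 hcurvle'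
        have hxle : x ≤ 2 := EReal.coe_le_coe_iff.1 hLle
        rw [hg0] at hreal
        have h5 : -(1 / (2 * M)) * (4 * x) = -(2 * x) / M := by
          field_simp
          ring
        rw [h5, div_le_iff₀ hMpos] at hreal
        linarith

    -- conclude for this t
    have h0K : (0:ℂ) ∈ K := by simp [hK]
    have hh0 : h 0 ≤ M := hmax 0 h0K
    have : h 0 = t ^ 2 * F (φ 0) (deriv φ 0) ^ 2 := by
      rw [hh]; simp
    linarith [this ▸ hh0]
  -- pass to the limit t → 1
  have hc0 : 0 ≤ F (φ 0) (deriv φ 0) := hnonneg _ (hφm h0U) _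
  have hsq : F (φ 0) (deriv φ 0) ^ 2 ≤ 1 := by
    have htend : Tendsto (fun t : ℝ => t ^ 2 * F (φ 0) (deriv φ 0) ^ 2)
        (nhdsWithin 1 (Set.Iio 1)) (nhds (F (φ 0) (deriv φ 0) ^ 2)) := by
      have : Tendsto (fun t : ℝ => t ^ 2 * F (φ 0) (deriv φ 0) ^ 2)
          (nhds 1) (nhds (1 ^ 2 * F (φ 0) (deriv φ 0) ^ 2)) := by
        exact (Continuous.tendsto (by continuity) 1)
      simpa using this.mono_left nhdsWithin_le_nhds
    refine le_of_tendsto htend ?_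
    filter_upwards [Ioo_mem_nhdsLT_of_mem (by norm_num : (1:ℝ) ∈ Set.Ioc 0 1)] with t ht
    exact main t ht
  nlinarith

/-- (i) If `F` is realizable at `(p₀;v₀)` then `F(p₀;v₀) ≥ κ_Ω(p₀;v₀)`;
(ii) if `K_F ≤ −4` then `F ≤ κ_Ω`; (iii) both together give `F(p₀;v₀) = κ_Ω(p₀;v₀)`. -/
theorem stmt_7 {n : ℕ} (hn : 1 ≤ n) (Ω : Set (Fin n → ℂ)) (hΩ : IsDomainSet Ω)
    (F : (Fin n → ℂ) → (Fin n → ℂ) → ℝ) (hF : IsFinsler Ω F)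
    (p₀ : Fin n → ℂ) (hp₀ : p₀ ∈ Ω) (v₀ : Fin n → ℂ) :
    (Realizable Ω F p₀ v₀ → kobMetric Ω p₀ v₀ ≤ F p₀ v₀) ∧
    ((∀ p ∈ Ω, ∀ v : Fin n → ℂ, v ≠ 0 → holCurv Ω F p v ≤ ((-4 : ℝ) : EReal)) →
      ∀ p ∈ Ω, ∀ v : Fin n → ℂ, F p v ≤ kobMetric Ω p v) ∧
    (Realizable Ω F p₀ v₀ →
      (∀ p ∈ Ω, ∀ v : Fin n → ℂ, v ≠ 0 → holCurv Ω F p v ≤ ((-4 : ℝ) : EReal)) →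
      F p₀ v₀ = kobMetric Ω p₀ v₀) := by
  obtain ⟨hΩopen, hΩconn⟩ := hΩ
  have hbdd : ∀ p v : Fin n → ℂ, BddBelow {c : ℝ | ∃ l : ℂ, ∃ φ : ℂ → Fin n → ℂ,
      HoloDisk Ω φ ∧ φ 0 = p ∧ l • deriv φ 0 = v ∧ c = ‖l‖} := by
    intro p v
    refine ⟨0, ?_⟩
    rintro c ⟨l, φ, -, -, -, rfl⟩
    exact norm_nonneg l
  have hpart1 : Realizable Ω F p₀ v₀ → kobMetric Ω p₀ v₀ ≤ F p₀ v₀ := by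
    rintro ⟨φ, l, hφ, h0, hl, habs⟩
    exact csInf_le (hbdd p₀ v₀) ⟨l, φ, hφ, h0, hl, habs.symm⟩
  have hpart2 : (∀ p ∈ Ω, ∀ v : Fin n → ℂ, v ≠ 0 → holCurv Ω F p v ≤ ((-4 : ℝ) : EReal)) →
      ∀ p ∈ Ω, ∀ v : Fin n → ℂ, F p v ≤ kobMetric Ω p v := by
    intro hcurv p hp v
    obtain ⟨δ, hδpos, hball⟩ := Metric.isOpen_iff.1 hΩopen p hp
    set cR : ℝ := δ / (2 * (‖v‖ + 1)) with hcR
    have hcRpos : 0 < cR := by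
      rw [hcR]
      positivity
    set c : ℂ := (cR : ℂ) with hc
    have hc0 : c ≠ 0 := by
      rw [hc]
      exact_mod_cast ne_of_gt hcRpos
    have hnormc : ‖c‖ = cR := by
      rw [hc, Complex.norm_real, Real.norm_eq_abs, abs_of_pos hcRpos]
    have hdlin : HasDerivAt (fun ζ : ℂ => p + (c * ζ) • v) (c • v) 0 := by
      have h1 : HasDerivAt (fun ζ : ℂ => c * ζ) c 0 := by
        simpa using (hasDerivAt_id (0:ℂ)).const_mul c
      have h2 := (h1.smul_const v).const_add p
      simpa using h2
    have hφlin : HoloDisk Ω (fun ζ : ℂ => p + (c * ζ) • v) := by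
      constructor
      · intro ζ hζ
        have h1 : HasDerivAt (fun ζ : ℂ => c * ζ) c ζ := by
          simpa using (hasDerivAt_id ζ).const_mul c
        exact (((h1.smul_const v).const_add p).differentiableAt).differentiableWithinAt
      · intro ζ hζ
        apply hball
        rw [mem_ball, dist_eq_norm, add_sub_cancel_left, norm_smul, norm_mul]
        have hζ1 : ‖ζ‖ ≤ 1 := le_of_lt (by simpa [UDisk] using hζ)
        have hkey : cR * ‖v‖ < δ := by
          rw [hcR, div_mul_eq_mul_div, div_lt_iff₀ (by positivity)]
          nlinarith [norm_nonneg v]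
        have h3 : ‖c‖ * ‖ζ‖ * ‖v‖ ≤ cR * ‖v‖ := by
          rw [hnormc]
          have : cR * ‖ζ‖ ≤ cR * 1 := mul_le_mul_of_nonneg_left hζ1 (le_of_lt hcRpos)
          nlinarith [norm_nonneg v, norm_nonneg ζ]
        linarith
    have hne : {b : ℝ | ∃ l : ℂ, ∃ φ : ℂ → Fin n → ℂ,
        HoloDisk Ω φ ∧ φ 0 = p ∧ l • deriv φ 0 = v ∧ b = ‖l‖}.Nonempty := by
      refine ⟨‖c⁻¹‖, c⁻¹, (fun ζ : ℂ => p + (c * ζ) • v), hφlin, by simp, ?_, rfl⟩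
      rw [hdlin.deriv, smul_smul, inv_mul_cancel₀ hc0, one_smul]
    apply le_csInf hne
    rintro b ⟨l, ψ, hψ, hψ0, hlv, rfl⟩
    have hkey : F (ψ 0) (deriv ψ 0) ≤ 1 := key_schwarz hF hcurv hψ
    rw [hψ0] at hkey
    calc F p v = F p (l • deriv ψ 0) := by rw [hlv]
      _ = ‖l‖ * F p (deriv ψ 0) := hF.2.2.2 p hp _ l
      _ ≤ ‖l‖ * 1 := mul_le_mul_of_nonneg_left hkey (norm_nonneg l)
      _ = ‖l‖ := mul_one _
  exact ⟨hpart1, hpart2,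
    fun hreal hcurv => le_antisymm (hpart2 hcurv p₀ hp₀ v₀) (hpart1 hreal)⟩
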